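/- For every state |ψ⟩ ∈ ℂ², (⟨−|⊗I)(I⊗T) Λ(Z) (|ψ⟩⊗|+⟩) = (1/√2) T H Z|ψ⟩, and for every unit vector |ψ⟩ each of the two measurement outcomes of this T gadget occurs with probability exactly 1/2: ‖(⟨±|⊗I)(I⊗T) Λ(Z) (|ψ⟩⊗|+⟩)‖² = 1/2. -/

import Mathlib

/-!
T gadget of ancilla-driven quantum computation, measurement outcome 1, and
the outcome probabilities: for every state |ψ⟩ ∈ ℂ²,
(⟨−|⊗I)(I⊗T) Λ(Z) (|ψ⟩⊗|+⟩) = (1/√2) THZ|ψ⟩, and for every unit vector |ψ⟩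
each of the two measurement outcomes occurs with probability exactly 1/2.
-/

noncomputable section

/-- The state `|+⟩ = (|0⟩+|1⟩)/√2` on one qubit. -/
def ketPlus : EuclideanSpace ℂ (Fin 2) := WithLp.toLp 2 (fun _ => (Real.sqrt 2 : ℂ)⁻¹)

/-- The Hadamard gate `H` acting on one qubit: `H|0⟩ = |+⟩`, `H|1⟩ = |−⟩`. -/
def Happ (v : EuclideanSpace ℂ (Fin 2)) : EuclideanSpace ℂ (Fin 2) :=
  WithLp.toLp 2 (fun i => (Real.sqrt 2 : ℂ)⁻¹ * (v 0 + (-1 : ℂ) ^ (i : ℕ) * v 1))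

/-- The Pauli gate `Z = diag(1,−1)` acting on one qubit. -/
def Zapp (v : EuclideanSpace ℂ (Fin 2)) : EuclideanSpace ℂ (Fin 2) :=
  WithLp.toLp 2 (fun i => (-1 : ℂ) ^ (i : ℕ) * v i)

/-- The gate `T = diag(1, e^{iπ/4})` acting on one qubit. -/
def Tapp (v : EuclideanSpace ℂ (Fin 2)) : EuclideanSpace ℂ (Fin 2) :=
  WithLp.toLp 2 (fun i => (if i = 1 then Complex.exp (Complex.I * Real.pi / 4) else 1) * v i)

/-- The gate `I ⊗ T` on two qubits (T acting on the second qubit). -/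
def TsndQubit (v : Fin 2 × Fin 2 → ℂ) : Fin 2 × Fin 2 → ℂ :=
  fun p => (if p.2 = 1 then Complex.exp (Complex.I * Real.pi / 4) else 1) * v p

/-- The tensor product `|ψ⟩ ⊗ |+⟩` on two qubits. -/
def tensorWithPlus (ψ : EuclideanSpace ℂ (Fin 2)) : Fin 2 × Fin 2 → ℂ :=
  fun p => ψ p.1 * ketPlus p.2

/-- The controlled-Z gate `Λ(Z) = |0⟩⟨0|⊗I + |1⟩⟨1|⊗Z` on two qubits. -/
def CZ (v : Fin 2 × Fin 2 → ℂ) : Fin 2 × Fin 2 → ℂ :=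
  fun p => (if p.1 = 1 ∧ p.2 = 1 then (-1 : ℂ) else 1) * v p

/-- The partial contraction `(⟨+|⊗I)` against the first qubit. -/
def braPlusFst (v : Fin 2 × Fin 2 → ℂ) : EuclideanSpace ℂ (Fin 2) :=
  WithLp.toLp 2 (fun j => (Real.sqrt 2 : ℂ)⁻¹ * (v (0, j) + v (1, j)))

/-- The partial contraction `(⟨−|⊗I)` against the first qubit. -/
def braMinusFst (v : Fin 2 × Fin 2 → ℂ) : EuclideanSpace ℂ (Fin 2) :=
  WithLp.toLp 2 (fun j => (Real.sqrt 2 : ℂ)⁻¹ * (v (0, j) - v (1, j)))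

lemma normsq_two (w : EuclideanSpace ℂ (Fin 2)) : ‖w‖ ^ 2 = ‖w 0‖ ^ 2 + ‖w 1‖ ^ 2 := by
  rw [EuclideanSpace.norm_eq, Real.sq_sqrt (Finset.sum_nonneg fun _ _ => sq_nonneg _),
    Fin.sum_univ_two]

lemma norm_e : ‖Complex.exp (Complex.I * Real.pi / 4)‖ = 1 := by
  rw [Complex.norm_exp]
  norm_num

lemma norm_c : ‖((Real.sqrt 2 : ℂ)⁻¹)‖ = (Real.sqrt 2)⁻¹ := by
  simp [Real.sqrt_nonneg]

lemma hcn : ‖(Real.sqrt 2 : ℂ)⁻¹ * (Real.sqrt 2 : ℂ)⁻¹‖ = 1 / 2 := by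
  rw [norm_mul, norm_c, ← mul_inv, Real.mul_self_sqrt (by norm_num)]
  norm_num
/-- T gadget, outcome 1: `(⟨−|⊗I)(I⊗T) Λ(Z) (|ψ⟩⊗|+⟩) = (1/√2) THZ|ψ⟩`;
moreover each of the two outcomes of the T gadget occurs with probability
exactly `1/2` on every unit input vector. -/
theorem T_gadget_outcome_one_and_probabilities :
    (∀ ψ : EuclideanSpace ℂ (Fin 2),
      braMinusFst (TsndQubit (CZ (tensorWithPlus ψ))) =
        (Real.sqrt 2 : ℂ)⁻¹ • Tapp (Happ (Zapp ψ))) ∧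
    ∀ ψ : EuclideanSpace ℂ (Fin 2), ‖ψ‖ = 1 →
      ‖braPlusFst (TsndQubit (CZ (tensorWithPlus ψ)))‖ ^ 2 = 1 / 2 ∧
        ‖braMinusFst (TsndQubit (CZ (tensorWithPlus ψ)))‖ ^ 2 = 1 / 2 := by
  have hplus0 : ∀ ψ : EuclideanSpace ℂ (Fin 2),
      braPlusFst (TsndQubit (CZ (tensorWithPlus ψ))) 0 =
        (Real.sqrt 2 : ℂ)⁻¹ * (Real.sqrt 2 : ℂ)⁻¹ * (ψ 0 + ψ 1) := by
    intro ψ; simp [braPlusFst, TsndQubit, CZ, tensorWithPlus, ketPlus]; ring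
  have hplus1 : ∀ ψ : EuclideanSpace ℂ (Fin 2),
      braPlusFst (TsndQubit (CZ (tensorWithPlus ψ))) 1 =
        (Real.sqrt 2 : ℂ)⁻¹ * (Real.sqrt 2 : ℂ)⁻¹ *
          (Complex.exp (Complex.I * Real.pi / 4) * (ψ 0 - ψ 1)) := by
    intro ψ; simp [braPlusFst, TsndQubit, CZ, tensorWithPlus, ketPlus]; ring
  have hminus0 : ∀ ψ : EuclideanSpace ℂ (Fin 2),
      braMinusFst (TsndQubit (CZ (tensorWithPlus ψ))) 0 =
        (Real.sqrt 2 : ℂ)⁻¹ * (Real.sqrt 2 : ℂ)⁻¹ * (ψ 0 - ψ 1) := by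
    intro ψ; simp [braMinusFst, TsndQubit, CZ, tensorWithPlus, ketPlus]; ring
  have hminus1 : ∀ ψ : EuclideanSpace ℂ (Fin 2),
      braMinusFst (TsndQubit (CZ (tensorWithPlus ψ))) 1 =
        (Real.sqrt 2 : ℂ)⁻¹ * (Real.sqrt 2 : ℂ)⁻¹ *
          (Complex.exp (Complex.I * Real.pi / 4) * (ψ 0 + ψ 1)) := by
    intro ψ; simp [braMinusFst, TsndQubit, CZ, tensorWithPlus, ketPlus]; ring
  have hc : (Real.sqrt 2 : ℝ)⁻¹ * (Real.sqrt 2 : ℝ)⁻¹ = 1 / 2 := by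
    rw [← mul_inv, Real.mul_self_sqrt (by norm_num)]; norm_num
  constructor
  · intro ψ
    ext j
    fin_cases j
    · show braMinusFst (TsndQubit (CZ (tensorWithPlus ψ))) 0 =
        ((Real.sqrt 2 : ℂ)⁻¹ • Tapp (Happ (Zapp ψ))) 0
      rw [hminus0]; simp [Tapp, Happ, Zapp]; ring
    · show braMinusFst (TsndQubit (CZ (tensorWithPlus ψ))) 1 =
        ((Real.sqrt 2 : ℂ)⁻¹ • Tapp (Happ (Zapp ψ))) 1
      rw [hminus1]; simp [Tapp, Happ, Zapp]; ring
  · intro ψ hψ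
    have hn : ‖ψ 0‖ ^ 2 + ‖ψ 1‖ ^ 2 = 1 := by
      have := normsq_two ψ
      rw [hψ] at this; linarith [this]
    have key : ‖ψ 0 + ψ 1‖ ^ 2 + ‖ψ 0 - ψ 1‖ ^ 2 = 2 * (‖ψ 0‖ ^ 2 + ‖ψ 1‖ ^ 2) := by
      simpa [pow_two] using parallelogram_law_with_norm ℂ (ψ 0) (ψ 1)
    constructor
    · rw [normsq_two, hplus0, hplus1]
      simp only [norm_mul, norm_e, norm_c, hc]
      nlinarith [key, hn]
    · rw [normsq_two, hminus0, hminus1]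
      simp only [norm_mul, norm_e, norm_c, hc]
      nlinarith [key, hn]

end
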